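/- arXiv:1303.5389 — 3 statements merged into one kernel-verified Lean document; each statement's English description precedes it below -/
import Mathlib

section
/- Let V and H be Banach spaces, U an open subset of V, and V_M a finite-dimensional subspace of V. Let K_M be a compact and convex subset of V_M ∩ U. Suppose T : U → H is a map such that (1) T restricted to V_M ∩ U is injective, (2) T is continuously Fréchet differentiable on U, and (3) for every x ∈ V_M ∩ U the Fréchet derivative dT_x restricted to V_M is injective. Then there exists a constant C > 0 such that for all x, y ∈ K_M, ‖x − y‖_V ≤ C · ‖T(x) − T(y)‖_H. -/
theorem bourgeois_abstract_lipschitz_stability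
    {V H : Type*} [NormedAddCommGroup V] [NormedSpace ℝ V] [CompleteSpace V]
    [NormedAddCommGroup H] [NormedSpace ℝ H] [CompleteSpace H]
    (U : Set V) (hU : IsOpen U)
    (VM : Submodule ℝ V) [FiniteDimensional ℝ VM]
    (KM : Set V) (hKMsub : KM ⊆ (VM : Set V) ∩ U)
    (hKMcompact : IsCompact KM) (hKMconvex : Convex ℝ KM)
    (T : V → H) (T' : V → V →L[ℝ] H)
    (hTdiff : ∀ x ∈ U, HasFDerivAt T (T' x) x)
    (hT'cont : ContinuousOn T' U)
    (hTinj : Set.InjOn T ((VM : Set V) ∩ U))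
    (hdTinj : ∀ x ∈ (VM : Set V) ∩ U, Set.InjOn (T' x) (VM : Set V)) :
    ∃ C > 0, ∀ x ∈ KM, ∀ y ∈ KM, ‖x - y‖ ≤ C * ‖T x - T y‖ := by
  by_contra hcon
  push_neg at hcon
  choose x hxK y hyK hlt using fun n : ℕ => hcon ((n : ℝ) + 1) (by positivity)
  have hxVM : ∀ n, x n ∈ (VM : Set V) := fun n => (hKMsub (hxK n)).1
  have hyVM : ∀ n, y n ∈ (VM : Set V) := fun n => (hKMsub (hyK n)).1
  have hKU : KM ⊆ U := fun z hz => (hKMsub hz).2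
  have hd : ∀ n, 0 < ‖x n - y n‖ := fun n => lt_of_le_of_lt (by positivity) (hlt n)
  set e : ℕ → VM := fun n => ‖x n - y n‖⁻¹ • (⟨x n, hxVM n⟩ - ⟨y n, hyVM n⟩ : VM) with he
  have hecoe : ∀ n, (e n : V) = ‖x n - y n‖⁻¹ • (x n - y n) := fun n => rfl
  have henorm : ∀ n, ‖e n‖ = 1 := by
    intro n
    have : ‖e n‖ = ‖(e n : V)‖ := rfl
    rw [this, hecoe, norm_smul, norm_inv, norm_norm,
      inv_mul_cancel₀ (hd n).ne']
  have hesph : ∀ n, e n ∈ Metric.sphere (0 : VM) 1 := by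
    intro n
    simp [mem_sphere_iff_norm, henorm n]
  -- compactness: extract convergent subsequence of ((x n, y n), e n)
  obtain ⟨⟨⟨a, b⟩, ev⟩, hmem, φ, hφ, htend⟩ :=
    (((hKMcompact.prod hKMcompact).prod (isCompact_sphere (0 : VM) 1)).tendsto_subseq
      (x := fun n => ((x n, y n), e n)) (fun n => ⟨⟨hxK n, hyK n⟩, hesph n⟩))
  obtain ⟨⟨haK, hbK⟩, hevs⟩ := hmem
  have hxa : Filter.Tendsto (fun n => x (φ n)) Filter.atTop (nhds a) :=
    ((continuous_fst.comp continuous_fst).tendsto _).comp htend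
  have hyb : Filter.Tendsto (fun n => y (φ n)) Filter.atTop (nhds b) :=
    ((continuous_snd.comp continuous_fst).tendsto _).comp htend
  have hee : Filter.Tendsto (fun n => e (φ n)) Filter.atTop (nhds ev) :=
    (continuous_snd.tendsto _).comp htend
  -- KM is bounded
  obtain ⟨D, hD⟩ := Metric.isBounded_iff.mp hKMcompact.isBounded
  have hD0 : 0 ≤ D := le_trans dist_nonneg (hD haK haK)
  -- T a = T b
  have hTab : T a = T b := by
    have hta : Filter.Tendsto (fun n => T (x (φ n)) - T (y (φ n))) Filter.atTop
        (nhds (T a - T b)) := by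
      exact (((hTdiff a (hKU haK)).continuousAt.tendsto.comp hxa).sub
        ((hTdiff b (hKU hbK)).continuousAt.tendsto.comp hyb))
    have ht0 : Filter.Tendsto (fun n => T (x (φ n)) - T (y (φ n))) Filter.atTop (nhds 0) := by
      apply squeeze_zero_norm (a := fun n : ℕ => D / ((n : ℝ) + 1))
      · intro n
        have h1 : ‖T (x (φ n)) - T (y (φ n))‖ ≤ D / ((φ n : ℝ) + 1) := by
          rw [le_div_iff₀ (by positivity)]
          have := (hlt (φ n)).le
          have hxyD : ‖x (φ n) - y (φ n)‖ ≤ D := by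
            rw [← dist_eq_norm]; exact hD (hxK _) (hyK _)
          nlinarith [norm_nonneg (T (x (φ n)) - T (y (φ n)))]
        refine h1.trans (div_le_div_of_nonneg_left hD0 (by positivity) ?_)
        have hle : n ≤ φ n := hφ.le_apply
        have := (Nat.cast_le (α := ℝ)).mpr hle
        linarith
      · have h2 : Filter.Tendsto (fun n : ℕ => ((n : ℝ) + 1)) Filter.atTop Filter.atTop :=
          Filter.tendsto_atTop_add_const_right _ 1 tendsto_natCast_atTop_atTop
        exact Filter.Tendsto.div_atTop tendsto_const_nhds h2
    have := tendsto_nhds_unique hta ht0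
    exact sub_eq_zero.mp this
  have hab : a = b := hTinj (hKMsub haK) (hKMsub hbK) hTab
  subst hab
  have haU : a ∈ U := hKU haK
  -- key estimate: ‖T' a ev‖ ≤ 2ε for all ε > 0
  have key : ∀ ε : ℝ, 0 < ε → ‖T' a (ev : V)‖ ≤ 2 * ε := by
    intro ε hε
    obtain ⟨δ, hδ, hball⟩ := Metric.continuousAt_iff.mp
      (hT'cont.continuousAt (hU.mem_nhds haU)) ε hε
    have hxev : ∀ᶠ n in Filter.atTop, x (φ n) ∈ Metric.ball a δ :=
      hxa (Metric.ball_mem_nhds a hδ)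
    have hyev : ∀ᶠ n in Filter.atTop, y (φ n) ∈ Metric.ball a δ :=
      hyb (Metric.ball_mem_nhds a hδ)
    have hsmall : ∀ᶠ n : ℕ in Filter.atTop, (1 : ℝ) / ((n : ℝ) + 1) ≤ ε := by
      have h2 : Filter.Tendsto (fun n : ℕ => (1 : ℝ) / ((n : ℝ) + 1)) Filter.atTop (nhds 0) :=
        Filter.Tendsto.div_atTop tendsto_const_nhds
          (Filter.tendsto_atTop_add_const_right _ 1 tendsto_natCast_atTop_atTop)
      exact h2.eventually (eventually_le_nhds hε)
    have hbnd : ∀ᶠ n in Filter.atTop, ‖T' a ((e (φ n) : V))‖ ≤ 2 * ε := by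
      filter_upwards [hxev, hyev, hsmall] with n h1 h2 h3
      set s := segment ℝ (y (φ n)) (x (φ n)) with hs
      have hsK : s ⊆ KM := hKMconvex.segment_subset (hyK _) (hxK _)
      have hsball : s ⊆ Metric.ball a δ := (convex_ball a δ).segment_subset h2 h1
      have hmvt : ‖T (x (φ n)) - T (y (φ n)) - (T' a) (x (φ n) - y (φ n))‖ ≤
          ε * ‖x (φ n) - y (φ n)‖ := by
        refine Convex.norm_image_sub_le_of_norm_hasFDerivWithin_le'
          (f := T) (f' := T') (φ := T' a)
          (fun z hz => (hTdiff z (hKU (hsK hz))).hasFDerivWithinAt)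
          (fun z hz => ?_) (convex_segment _ _)
          (left_mem_segment ℝ _ _) (right_mem_segment ℝ _ _)
        have := hball (hsball hz)
        rw [dist_eq_norm] at this
        exact this.le
      have hTsmall : ‖T (x (φ n)) - T (y (φ n))‖ ≤ ε * ‖x (φ n) - y (φ n)‖ := by
        have h4 : ‖T (x (φ n)) - T (y (φ n))‖ ≤ ‖x (φ n) - y (φ n)‖ / ((φ n : ℝ) + 1) := by
          rw [le_div_iff₀ (by positivity)]
          nlinarith [(hlt (φ n)).le]
        refine h4.trans ?_
        rw [div_le_iff₀ (by positivity)]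
        have hφn : (n : ℝ) ≤ (φ n : ℝ) := Nat.cast_le.mpr (hφ.le_apply (x := n))
        have h5 : (1 : ℝ) / ((φ n : ℝ) + 1) ≤ 1 / ((n : ℝ) + 1) := by
          apply div_le_div_of_nonneg_left one_pos.le (by positivity)
          linarith
        have h6 : (1 : ℝ) / ((φ n : ℝ) + 1) ≤ ε := h5.trans h3
        have h6' : (1 : ℝ) ≤ ε * ((φ n : ℝ) + 1) := (div_le_iff₀ (by positivity)).mp h6
        have hdn := (hd (φ n)).le
        nlinarith [mul_le_mul_of_nonneg_left h6' hdn]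
      have hlin : ‖(T' a) (x (φ n) - y (φ n))‖ ≤ 2 * ε * ‖x (φ n) - y (φ n)‖ := by
        have := norm_sub_le (T (x (φ n)) - T (y (φ n)))
          (T (x (φ n)) - T (y (φ n)) - (T' a) (x (φ n) - y (φ n)))
        simp only [sub_sub_cancel] at this
        calc ‖(T' a) (x (φ n) - y (φ n))‖
            ≤ ‖T (x (φ n)) - T (y (φ n))‖ +
              ‖T (x (φ n)) - T (y (φ n)) - (T' a) (x (φ n) - y (φ n))‖ := this
          _ ≤ ε * ‖x (φ n) - y (φ n)‖ + ε * ‖x (φ n) - y (φ n)‖ := add_le_add hTsmall hmvt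
          _ = 2 * ε * ‖x (φ n) - y (φ n)‖ := by ring
      rw [hecoe, map_smul, norm_smul, norm_inv, norm_norm]
      rw [inv_mul_le_iff₀ (hd (φ n))]
      linarith [hlin]
    have hT'tend : Filter.Tendsto (fun n => ‖T' a ((e (φ n) : V))‖) Filter.atTop
        (nhds ‖T' a (ev : V)‖) := by
      have hcoe : Filter.Tendsto (fun n => (e (φ n) : V)) Filter.atTop (nhds (ev : V)) :=
        (continuous_subtype_val.tendsto _).comp hee
      exact (continuous_norm.tendsto _).comp (((T' a).continuous.tendsto _).comp hcoe)
    exact le_of_tendsto hT'tend hbnd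
  have h0 : (T' a) (ev : V) = 0 := by
    by_contra hne
    have hpos : 0 < ‖(T' a) (ev : V)‖ := norm_pos_iff.mpr hne
    have := key (‖(T' a) (ev : V)‖ / 4) (by positivity)
    linarith
  have hev0 : (ev : V) = 0 := by
    refine hdTinj a (hKMsub haK) ev.2 VM.zero_mem ?_
    rw [h0, map_zero]
  have : ‖ev‖ = 1 := by simpa [mem_sphere_iff_norm] using hevs
  rw [show ‖ev‖ = ‖(ev : V)‖ from rfl, hev0, norm_zero] at this
  exact one_ne_zero this.symm
end

section
/- Let V and H be Banach spaces, V_M a finite-dimensional subspace of V, and K_M a compact convex subset of V_M contained in an open set U ⊆ V. If T : U → H is continuously Fréchet differentiable and for every x ∈ K_M the restriction of dT_x to V_M is injective, then there exist constants c > 0 and δ > 0 such that for all x, y ∈ K_M with ‖x − y‖ ≤ δ, ‖T(x) − T(y)‖_H ≥ c · ‖x − y‖_V. -/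
theorem local_lipschitz_lower_bound
    {V H : Type*} [NormedAddCommGroup V] [NormedSpace ℝ V] [CompleteSpace V]
    [NormedAddCommGroup H] [NormedSpace ℝ H] [CompleteSpace H]
    (U : Set V) (hU : IsOpen U)
    (VM : Submodule ℝ V) [FiniteDimensional ℝ VM]
    (KM : Set V) (hKMsub : KM ⊆ (VM : Set V) ∩ U)
    (hKMcompact : IsCompact KM) (hKMconvex : Convex ℝ KM)
    (T : V → H) (T' : V → V →L[ℝ] H)
    (hTdiff : ∀ x ∈ U, HasFDerivAt T (T' x) x)
    (hT'cont : ContinuousOn T' U)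
    (hdTinj : ∀ x ∈ KM, Set.InjOn (T' x) (VM : Set V)) :
    ∃ c > 0, ∃ δ > 0, ∀ x ∈ KM, ∀ y ∈ KM,
      ‖x - y‖ ≤ δ → c * ‖x - y‖ ≤ ‖T x - T y‖ := by
  rcases KM.eq_empty_or_nonempty with hKM | ⟨x₀, hx₀⟩
  · exact ⟨1, one_pos, 1, one_pos, fun x hx => by simp [hKM] at hx⟩
  -- Step 1: uniform lower bound for the derivative on KM × VM
  have hstep1 : ∃ c > 0, ∀ x ∈ KM, ∀ v ∈ (VM : Set V), c * ‖v‖ ≤ ‖T' x v‖ := by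
    by_cases htriv : ∀ v ∈ (VM : Set V), v = 0
    · exact ⟨1, one_pos, fun x hx v hv => by simp [htriv v hv]⟩
    push_neg at htriv
    obtain ⟨v₁, hv₁, hv₁0⟩ := htriv
    have hnv₁ : ‖v₁‖ ≠ 0 := norm_ne_zero_iff.mpr hv₁0
    set u₁ : VM := (‖v₁‖⁻¹) • (⟨v₁, hv₁⟩ : VM) with hu₁
    have hnorm_u₁ : ‖u₁‖ = 1 := by
      have h1 : ‖(⟨v₁, hv₁⟩ : VM)‖ = ‖v₁‖ := rfl
      rw [hu₁, norm_smul, h1, norm_inv, Real.norm_eq_abs,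
        abs_of_nonneg (norm_nonneg v₁), inv_mul_cancel₀ hnv₁]
    set C : Set (V × VM) := KM ×ˢ Metric.sphere (0 : VM) 1 with hC
    have hCcomp : IsCompact C := hKMcompact.prod (isCompact_sphere 0 1)
    have hCne : C.Nonempty :=
      ⟨(x₀, u₁), Set.mem_prod.mpr ⟨hx₀, mem_sphere_zero_iff_norm.mpr hnorm_u₁⟩⟩
    have hf : ContinuousOn (fun p : V × VM => ‖T' p.1 (p.2 : V)‖) C := by
      apply ContinuousOn.norm
      apply ContinuousOn.clm_apply
      · exact hT'cont.comp continuousOn_fst (fun p hp => (hKMsub hp.1).2)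
      · exact (continuous_subtype_val.comp continuous_snd).continuousOn
    obtain ⟨p₀, hp₀, hmin'⟩ := hCcomp.exists_isMinOn hCne hf
    have hmin : ∀ q ∈ C, ‖T' p₀.1 (p₀.2 : V)‖ ≤ ‖T' q.1 (q.2 : V)‖ := fun q hq => hmin' hq
    have hp₀K : p₀.1 ∈ KM := hp₀.1
    have hp₀s : ‖p₀.2‖ = 1 := mem_sphere_zero_iff_norm.mp hp₀.2
    have hc₀pos : 0 < ‖T' p₀.1 (p₀.2 : V)‖ := by
      rw [norm_pos_iff]
      intro h
      have h2 : (p₀.2 : V) = 0 := by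
        apply hdTinj p₀.1 hp₀K p₀.2.2 VM.zero_mem
        simp [h]
      have : (p₀.2 : VM) = 0 := Subtype.ext h2
      rw [this] at hp₀s
      simp at hp₀s
    refine ⟨‖T' p₀.1 (p₀.2 : V)‖, hc₀pos, fun x hx v hv => ?_⟩
    rcases eq_or_ne v 0 with rfl | hv0
    · simp
    have hnv : 0 < ‖v‖ := norm_pos_iff.mpr hv0
    set u : VM := (‖v‖⁻¹) • (⟨v, hv⟩ : VM) with hu
    have hnorm_u : ‖u‖ = 1 := by
      have h1 : ‖(⟨v, hv⟩ : VM)‖ = ‖v‖ := rfl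
      rw [hu, norm_smul, h1, norm_inv, Real.norm_eq_abs,
        abs_of_nonneg (norm_nonneg v), inv_mul_cancel₀ hnv.ne']
    have hmem : (x, u) ∈ C :=
      Set.mem_prod.mpr ⟨hx, mem_sphere_zero_iff_norm.mpr hnorm_u⟩
    have hle := hmin (x, u) hmem
    have hcoe : ((x, u).2 : V) = ‖v‖⁻¹ • v := rfl
    rw [hcoe, map_smul, norm_smul, norm_inv, Real.norm_eq_abs,
      abs_of_nonneg (norm_nonneg v)] at hle
    rw [inv_mul_eq_div, le_div_iff₀ hnv] at hle
    exact hle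
  obtain ⟨c₀, hc₀, hbound⟩ := hstep1
  set c : ℝ := c₀ / 2 with hc
  have hcpos : 0 < c := by positivity
  -- Step 2: uniform continuity of T' on KM
  have hUC : UniformContinuousOn T' KM :=
    hKMcompact.uniformContinuousOn_of_continuous
      (hT'cont.mono (fun z hz => (hKMsub hz).2))
  rw [Metric.uniformContinuousOn_iff] at hUC
  obtain ⟨δ, hδpos, hδ⟩ := hUC c hcpos
  refine ⟨c, hcpos, δ / 2, by positivity, fun x hx y hy hxy => ?_⟩
  have hseg : segment ℝ x y ⊆ KM := hKMconvex.segment_subset hx hy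
  -- for z in the segment, ‖z - y‖ ≤ ‖x - y‖
  have hsegdist : ∀ z ∈ segment ℝ x y, ‖z - y‖ ≤ ‖x - y‖ := by
    rintro z ⟨a, b, ha, hb, hab, rfl⟩
    have hb' : b = 1 - a := by linarith
    have ha1 : a ≤ 1 := by linarith
    have heq : a • x + b • y - y = a • (x - y) := by
      rw [hb', smul_sub, sub_smul, one_smul]
      abel
    rw [heq, norm_smul, Real.norm_eq_abs, abs_of_nonneg ha]
    calc a * ‖x - y‖ ≤ 1 * ‖x - y‖ := by
          apply mul_le_mul_of_nonneg_right ha1 (norm_nonneg _)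
      _ = ‖x - y‖ := one_mul _
  -- mean value inequality
  have hMVT : ‖T x - T y - (T' y) (x - y)‖ ≤ c * ‖x - y‖ := by
    apply Convex.norm_image_sub_le_of_norm_hasFDerivWithin_le'
      (f := T) (f' := T') (φ := T' y) (s := segment ℝ x y)
    · intro z hz
      exact (hTdiff z (hKMsub (hseg hz)).2).hasFDerivWithinAt
    · intro z hz
      have hzK : z ∈ KM := hseg hz
      have hdzy : dist z y < δ := by
        rw [dist_eq_norm]
        calc ‖z - y‖ ≤ ‖x - y‖ := hsegdist z hz
          _ ≤ δ / 2 := hxy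
          _ < δ := by linarith
      have := hδ z hzK y hy hdzy
      rw [dist_eq_norm] at this
      exact le_of_lt this
    · exact convex_segment x y
    · exact right_mem_segment ℝ x y
    · exact left_mem_segment ℝ x y
  have hxyVM : x - y ∈ (VM : Set V) := VM.sub_mem (hKMsub hx).1 (hKMsub hy).1
  have hlow : c₀ * ‖x - y‖ ≤ ‖(T' y) (x - y)‖ := hbound y hy (x - y) hxyVM
  have htri : ‖(T' y) (x - y)‖ ≤ ‖T x - T y‖ + ‖T x - T y - (T' y) (x - y)‖ := by
    calc ‖(T' y) (x - y)‖ = ‖(T x - T y) - (T x - T y - (T' y) (x - y))‖ := by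
          congr 1; abel
      _ ≤ ‖T x - T y‖ + ‖T x - T y - (T' y) (x - y)‖ := norm_sub_le _ _
  have : c₀ * ‖x - y‖ ≤ ‖T x - T y‖ + c * ‖x - y‖ := by linarith
  have hc2 : c₀ = 2 * c := by rw [hc]; ring
  nlinarith [norm_nonneg (x - y)]
end

section
/- Let V, H be Banach spaces, K ⊆ V compact convex contained in an open set U, and T : U → H continuously Fréchet differentiable. Suppose there is c > 0 such that ‖dT_x(y − x)‖_H ≥ c ‖y − x‖_V for all x, y ∈ K. Then there exists δ > 0 such that ‖T(y) − T(x)‖_H ≥ (c/2) ‖y − x‖_V whenever x, y ∈ K and ‖y − x‖_V ≤ δ. -/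
theorem local_lower_bound_from_coercive_derivative
    {V H : Type*} [NormedAddCommGroup V] [NormedSpace ℝ V] [CompleteSpace V]
    [NormedAddCommGroup H] [NormedSpace ℝ H] [CompleteSpace H]
    (U : Set V) (hU : IsOpen U)
    (K : Set V) (hKsub : K ⊆ U) (hKcompact : IsCompact K) (hKconvex : Convex ℝ K)
    (T : V → H) (T' : V → V →L[ℝ] H)
    (hTdiff : ∀ x ∈ U, HasFDerivAt T (T' x) x)
    (hT'cont : ContinuousOn T' U)
    (c : ℝ) (hc : 0 < c)
    (hcoer : ∀ x ∈ K, ∀ y ∈ K, c * ‖y - x‖ ≤ ‖T' x (y - x)‖) :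
    ∃ δ > 0, ∀ x ∈ K, ∀ y ∈ K, ‖y - x‖ ≤ δ →
      (c / 2) * ‖y - x‖ ≤ ‖T y - T x‖ := by
  -- uniform continuity of T' on the compact K
  have hUC : UniformContinuousOn T' K :=
    hKcompact.uniformContinuousOn_of_continuous (hT'cont.mono hKsub)
  rw [Metric.uniformContinuousOn_iff] at hUC
  obtain ⟨δ, hδ, hδ'⟩ := hUC (c / 2) (by linarith)
  refine ⟨δ / 2, by linarith, fun x hx y hy hxy => ?_⟩
  -- derivative of z ↦ T z - T' x z is T' z - T' x, with norm ≤ c/2 on [x,y]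
  have hseg : segment ℝ x y ⊆ K := hKconvex.segment_subset hx hy
  have key : ‖(T y - T' x y) - (T x - T' x x)‖ ≤ (c / 2) * ‖y - x‖ := by
    apply Convex.norm_image_sub_le_of_norm_hasFDerivWithin_le
      (f := fun z => T z - T' x z) (f' := fun z => T' z - T' x) (s := segment ℝ x y)
    · intro z hz
      exact ((hTdiff z (hKsub (hseg hz))).sub
        ((T' x).hasFDerivAt)).hasFDerivWithinAt
    · intro z hz
      have hzK := hseg hz
      have hdist : dist z x < δ := by
        have : ‖z - x‖ ≤ ‖y - x‖ := by
          obtain ⟨a, b, ha, hb, hab, rfl⟩ := hz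
          have : a • x + b • y - x = b • (y - x) := by
            have haeq : a = 1 - b := by linarith
            subst haeq
            module
          rw [this, norm_smul, Real.norm_eq_abs, abs_of_nonneg hb]
          nlinarith [norm_nonneg (y - x)]
        rw [dist_eq_norm]
        calc ‖z - x‖ ≤ ‖y - x‖ := this
          _ ≤ δ / 2 := hxy
          _ < δ := by linarith
      have := hδ' z hzK x hx hdist
      rw [dist_eq_norm] at this
      exact le_of_lt this
    · exact convex_segment x y
    · exact left_mem_segment ℝ x y
    · exact right_mem_segment ℝ x y
  have hco := hcoer x hx y hy
  have h1 : ‖T' x (y - x)‖ ≤ ‖T y - T x‖ + (c / 2) * ‖y - x‖ := by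
    have : T' x (y - x) = (T y - T x) - ((T y - T' x y) - (T x - T' x x)) := by
      simp [map_sub]; abel
    rw [this]
    calc ‖(T y - T x) - ((T y - T' x y) - (T x - T' x x))‖
        ≤ ‖T y - T x‖ + ‖(T y - T' x y) - (T x - T' x x)‖ := norm_sub_le _ _
      _ ≤ ‖T y - T x‖ + (c / 2) * ‖y - x‖ := by linarith
  linarith
end
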